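/- Let G be a finite strongly connected directed graph that is aperiodic (i.e., the greatest common divisor of the lengths of all its cycles is 1) with N > 2 vertices. Then for every n ≥ ⌊N^(4·ln N − 1)/6⌋, there is a directed path of length exactly n between any two vertices of G. -/

import Mathlib

def HasPath {V : Type*} (E : V → V → Prop) (n : ℕ) (u v : V) : Prop :=
  ∃ f : ℕ → V, f 0 = u ∧ f n = v ∧ ∀ i < n, E (f i) (f (i + 1))

namespace PathAux

variable {V : Type*} {E : V → V → Prop}

theorem hp_zero (E : V → V → Prop) (u : V) : HasPath E 0 u u :=
  ⟨fun _ => u, rfl, rfl, by omega⟩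

theorem hp_zero_iff {u v : V} : HasPath E 0 u v ↔ u = v := by
  constructor
  · rintro ⟨f, h0, hn, -⟩; rw [← h0, ← hn]
  · rintro rfl; exact hp_zero E u

theorem hp_one {u v : V} (h : E u v) : HasPath E 1 u v := by
  refine ⟨fun i => if i = 0 then u else v, by simp, by simp, ?_⟩
  intro i hi
  have : i = 0 := by omega
  subst this; simpa using h

theorem hp_one_iff {u v : V} : HasPath E 1 u v ↔ E u v := by
  refine ⟨?_, hp_one⟩
  rintro ⟨f, h0, hn, he⟩
  have := he 0 (by omega)
  rwa [h0, hn] at this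

theorem hp_trans {m n : ℕ} {u w v : V}
    (h1 : HasPath E m u w) (h2 : HasPath E n w v) : HasPath E (m + n) u v := by
  obtain ⟨f, hf0, hfm, hfe⟩ := h1
  obtain ⟨g, hg0, hgn, hge⟩ := h2
  refine ⟨fun i => if i ≤ m then f i else g (i - m), by simp [hf0], ?_, ?_⟩
  · by_cases h : n = 0
    · subst h
      simp only [Nat.add_zero, le_refl, if_pos]
      rw [hfm, ← hg0]; exact hgn.symm ▸ rfl
    · have hle : ¬ (m + n ≤ m) := by omega
      simp only [hle, if_false]
      simpa using hgn
  · intro i hi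
    by_cases h1' : i + 1 ≤ m
    · have h2' : i ≤ m := by omega
      simp only [h1', h2', if_pos]
      exact hfe i (by omega)
    · by_cases h2' : i ≤ m
      · have : i = m := by omega
        subst this
        simp only [h1', le_refl, if_pos, if_neg]
        have : i + 1 - i = 1 := by omega
        rw [this, hfm, ← hg0]
        exact hge 0 (by omega)
      · have h3 : ¬ (i + 1 ≤ m) := by omega
        simp only [h2', h3, if_false]
        have : i + 1 - m = (i - m) + 1 := by omega
        rw [this]
        exact hge (i - m) (by omega)

theorem hp_split {a b : ℕ} {u v : V} (h : HasPath E (a + b) u v) :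
    ∃ w, HasPath E a u w ∧ HasPath E b w v := by
  obtain ⟨f, h0, hn, he⟩ := h
  refine ⟨f a, ⟨f, h0, rfl, fun i hi => he i (by omega)⟩,
    ⟨fun t => f (a + t), rfl, by rw [← hn], fun i hi => ?_⟩⟩
  show E (f (a + i)) (f (a + (i + 1)))
  have heq : a + (i + 1) = a + i + 1 := by omega
  rw [heq]
  exact he (a + i) (by omega)

theorem hp_prefix {n : ℕ} {u v : V} {f : ℕ → V} (h0 : f 0 = u) (hn : f n = v)
    (he : ∀ i < n, E (f i) (f (i + 1))) {t : ℕ} (ht : t ≤ n) :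
    HasPath E t u (f t) :=
  ⟨f, h0, rfl, fun i hi => he i (by omega)⟩

theorem hp_excise {n : ℕ} {u v : V} {f : ℕ → V} (h0 : f 0 = u) (hn : f n = v)
    (he : ∀ i < n, E (f i) (f (i + 1))) {i j : ℕ} (hij : i < j) (hjn : j ≤ n)
    (hfij : f i = f j) : HasPath E (n - (j - i)) u v := by
  refine ⟨fun t => if t ≤ i then f t else f (t + (j - i)), by simp [h0], ?_, ?_⟩
  · show (if n - (j - i) ≤ i then f (n - (j - i)) else f (n - (j - i) + (j - i))) = v
    by_cases hc : n - (j - i) ≤ i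
    · have h1 : n = j := by omega
      have h2 : n - (j - i) = i := by omega
      rw [if_pos hc, h2, hfij, ← h1, hn]
    · rw [if_neg hc]
      have : n - (j - i) + (j - i) = n := by omega
      rw [this, hn]
  · intro t ht
    show E (if t ≤ i then f t else f (t + (j - i)))
        (if t + 1 ≤ i then f (t + 1) else f (t + 1 + (j - i)))
    by_cases ha : t + 1 ≤ i
    · rw [if_pos (by omega : t ≤ i), if_pos ha]
      exact he t (by omega)
    · by_cases h2' : t ≤ i
      · have hti : t = i := by omega
        rw [if_pos h2', if_neg ha]
        have h3 : t + 1 + (j - i) = j + 1 := by omega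
        rw [h3, hti, hfij]
        exact he j (by omega)
      · rw [if_neg h2', if_neg ha]
        have h4 : t + 1 + (j - i) = t + (j - i) + 1 := by omega
        rw [h4]
        exact he (t + (j - i)) (by omega)

theorem hp_mul {s : ℕ} {w : V} (h : HasPath E s w w) : ∀ k, HasPath E (k * s) w w := by
  intro k
  induction k with
  | zero => simpa using hp_zero E w
  | succ k ih =>
      have := hp_trans ih h
      simpa [Nat.succ_mul] using this



open Classical in
theorem exists_min_path [Fintype V] {u v : V}
    (h : ∃ n, HasPath E n u v) :
    ∃ n, HasPath E n u v ∧ n + 1 ≤ Fintype.card V := by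
  classical
  let n := Nat.find h
  have hp : HasPath E n u v := Nat.find_spec h
  refine ⟨n, hp, ?_⟩
  by_contra hcon
  push_neg at hcon
  have hcard : Fintype.card V < Fintype.card (Fin (n + 1)) := by simpa using hcon
  obtain ⟨f, h0, hn, he⟩ := hp
  obtain ⟨a, b, hab, hfab⟩ :=
    Fintype.exists_ne_map_eq_of_card_lt (fun i : Fin (n + 1) => f i) hcard
  rcases lt_or_gt_of_ne (fun hh : (a : ℕ) = (b : ℕ) => hab (Fin.ext hh)) with hlt | hlt
  · have := hp_excise h0 hn he hlt (by omega) hfab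
    exact absurd this (Nat.find_min h (by omega))
  · have := hp_excise h0 hn he hlt (by omega) hfab.symm
    exact absurd this (Nat.find_min h (by omega))

open Classical in
theorem exists_min_path_to_set [Fintype V] {u : V} (W : Finset V)
    (h : ∃ n, ∃ w ∈ W, HasPath E n u w) :
    ∃ n, (∃ w ∈ W, HasPath E n u w) ∧ n ≤ Fintype.card V - W.card := by
  classical
  let n := Nat.find h
  obtain ⟨w, hwW, hp⟩ : ∃ w ∈ W, HasPath E n u w := Nat.find_spec h
  refine ⟨n, ⟨w, hwW, hp⟩, ?_⟩
  obtain ⟨f, h0, hn, he⟩ := hp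
  -- vertices before the end avoid W
  have havoid : ∀ t < n, f t ∉ W := by
    intro t ht hmem
    exact Nat.find_min h ht ⟨f t, hmem, hp_prefix h0 hn he (le_of_lt ht)⟩
  -- injectivity on [0, n)
  have hinj : ∀ a < n, ∀ b < n, f a = f b → a = b := by
    intro a ha b hb hfab
    by_contra hne
    rcases lt_or_gt_of_ne hne with hlt | hlt
    · have hpath := hp_excise h0 hn he hlt (by omega) hfab
      have : ∃ w' ∈ W, HasPath E (n - (b - a)) u w' := ⟨w, hwW, hpath⟩
      exact Nat.find_min h (by omega) this
    · have hpath := hp_excise h0 hn he hlt (by omega) hfab.symm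
      have : ∃ w' ∈ W, HasPath E (n - (a - b)) u w' := ⟨w, hwW, hpath⟩
      exact Nat.find_min h (by omega) this
  -- build injection Fin n → {x // x ∉ W}
  have hcardle : n ≤ Fintype.card {x : V // x ∉ W} := by
    have : Function.Injective (fun i : Fin n => (⟨f i, havoid i i.isLt⟩ : {x : V // x ∉ W})) := by
      intro a b hab
      exact Fin.ext (hinj a a.isLt b b.isLt (congrArg Subtype.val hab))
    simpa using Fintype.card_le_of_injective _ this
  have : Fintype.card {x : V // x ∉ W} = Fintype.card V - W.card := by
    rw [Fintype.card_subtype_compl]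
    congr 1
    exact Fintype.card_coe W
  omega

theorem residue_lemma [Fintype V]
    (hsc : ∀ u v : V, ∃ n : ℕ, 0 < n ∧ HasPath E n u v)
    (haper : ∀ d : ℕ, (∀ n : ℕ, 0 < n → (∃ u : V, HasPath E n u u) → d ∣ n) → d = 1)
    {s : ℕ} (hs : 0 < s) (y : V) (a : ℕ) :
    ∃ ℓ : ℕ, HasPath E ℓ y y ∧ s ∣ (a + ℓ) := by
  classical
  set S : Set ℤ := {x : ℤ | ∃ ℓ : ℕ, HasPath E ℓ y y ∧ x = (ℓ : ℤ)} with hS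
  set H : AddSubgroup ℤ := AddSubgroup.closure S with hH
  obtain ⟨d, hd⟩ := Int.subgroup_cyclic H
  -- d divides every closed-walk length at y
  have hgen : ∀ ℓ : ℕ, HasPath E ℓ y y → d ∣ (ℓ : ℤ) := by
    intro ℓ hℓ
    have hmem : ((ℓ : ℤ)) ∈ H := AddSubgroup.subset_closure ⟨ℓ, hℓ, rfl⟩
    rw [hd, AddSubgroup.mem_closure_singleton] at hmem
    obtain ⟨k, hk⟩ := hmem
    exact ⟨k, by rw [← hk, smul_eq_mul, mul_comm]⟩
  -- d.natAbs divides every closed-walk length anywhere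
  have hall : ∀ n : ℕ, 0 < n → (∃ z : V, HasPath E n z z) → d.natAbs ∣ n := by
    rintro n hn ⟨z, hz⟩
    obtain ⟨p, hp0, hpP⟩ := hsc y z
    obtain ⟨q, hq0, hqP⟩ := hsc z y
    have h1 : HasPath E (p + q) y y := hp_trans hpP hqP
    have h2 : HasPath E (p + (n + q)) y y := hp_trans hpP (hp_trans hz hqP)
    have hd1 := hgen _ h1
    have hd2 := hgen _ h2
    have : d ∣ (n : ℤ) := by
      have : ((p : ℤ) + (n + q)) - ((p : ℤ) + q) = (n : ℤ) := by ring
      rw [← this]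
      exact dvd_sub (by exact_mod_cast hd2) (by exact_mod_cast hd1)
    exact Int.ofNat_dvd.mp (Int.natAbs_dvd.mpr this)
  have hd1 : d.natAbs = 1 := haper _ hall
  -- hence H = ⊤
  have hHtop : ∀ x : ℤ, x ∈ H := by
    intro x
    rw [hd, AddSubgroup.mem_closure_singleton]
    have : d ∣ x := (Int.isUnit_iff_natAbs_eq.mpr hd1).dvd
    obtain ⟨k, hk⟩ := this
    exact ⟨k, by rw [hk, smul_eq_mul, mul_comm]⟩
  -- closure induction to produce an actual walk in each residue class
  have key : ∀ x : ℤ, x ∈ H →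
      ∃ ℓ : ℕ, HasPath E ℓ y y ∧ ((x : ZMod s) = ((ℓ : ℕ) : ZMod s)) := by
    intro x hx
    induction hx using AddSubgroup.closure_induction with
    | mem x hxS =>
        obtain ⟨ℓ, hℓ, rfl⟩ := hxS
        exact ⟨ℓ, hℓ, by push_cast; ring⟩
    | zero => exact ⟨0, hp_zero E y, by push_cast; ring⟩
    | add x x' hx hx' ihx ihx' =>
        obtain ⟨ℓ1, h1, he1⟩ := ihx
        obtain ⟨ℓ2, h2, he2⟩ := ihx'
        exact ⟨ℓ1 + ℓ2, hp_trans h1 h2, by push_cast; rw [he1, he2]⟩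
    | neg x hx ihx =>
        obtain ⟨ℓ, hℓ, heℓ⟩ := ihx
        refine ⟨(s - 1) * ℓ, hp_mul hℓ (s - 1), ?_⟩
        have hcast : (((s - 1) * ℓ : ℕ) : ZMod s) = ((s : ZMod s) - 1) * (ℓ : ZMod s) := by
          push_cast [Nat.cast_sub hs]
          ring
        rw [hcast, ZMod.natCast_self]
        push_cast
        rw [← heℓ]
        ring
  obtain ⟨ℓ, hℓ, heq⟩ := key (-(a : ℤ)) (hHtop _)
  refine ⟨ℓ, hℓ, ?_⟩
  haveI : NeZero s := ⟨hs.ne'⟩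
  have hzero : ((a + ℓ : ℕ) : ZMod s) = 0 := by
    push_cast
    push_cast at heq
    rw [← heq]
    ring
  exact (ZMod.natCast_eq_zero_iff _ _).mp hzero
theorem hp_pow_of {s : ℕ} : ∀ {k : ℕ} {x y : V},
    HasPath (fun a b => HasPath E s a b) k x y → HasPath E (k * s) x y := by
  intro k
  induction k with
  | zero => intro x y h; rw [hp_zero_iff] at h; subst h; simpa using hp_zero E x
  | succ k ih =>
      intro x y h
      obtain ⟨w, h1, h2⟩ := hp_split (a := k) (b := 1) (by simpa using h)
      rw [hp_one_iff] at h2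
      have := hp_trans (ih h1) h2
      simpa [Nat.succ_mul] using this

theorem hp_pow_to {s : ℕ} : ∀ {k : ℕ} {x y : V},
    HasPath E (k * s) x y → HasPath (fun a b => HasPath E s a b) k x y := by
  intro k
  induction k with
  | zero => intro x y h; simp at h; rw [hp_zero_iff] at h; subst h; exact hp_zero _ x
  | succ k ih =>
      intro x y h
      have : HasPath E (k * s + s) x y := by rwa [← Nat.succ_mul]
      obtain ⟨w, h1, h2⟩ := hp_split this
      have := hp_trans (ih h1) (hp_one (E := fun a b => HasPath E s a b) h2)
      exact this

end PathAux

open PathAux in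
private theorem card_bound_aux (N : ℕ) (hN : 3 ≤ N) :
    ((N * N - N : ℕ) : ℝ) ≤ (N : ℝ) ^ ((4 : ℝ) * Real.log N - 1) / 6 := by
  have hNR : (3 : ℝ) ≤ (N : ℝ) := by exact_mod_cast hN
  have hNpos : (0 : ℝ) < N := by linarith
  have hlog2l : (0.6931471803 : ℝ) < Real.log 2 := Real.log_two_gt_d9
  have hlog2u : Real.log 2 < 0.6931471808 := Real.log_two_lt_d9
  have hcast : ((N * N - N : ℕ) : ℝ) = (N : ℝ) * N - N := by
    have : N ≤ N * N := Nat.le_mul_of_pos_left N (by omega)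
    push_cast [Nat.cast_sub this]
    ring
  rw [hcast]
  rcases eq_or_lt_of_le hN with hN3 | hN4
  · -- N = 3
    have h3 : (N : ℝ) = 3 := by exact_mod_cast hN3.symm
    rw [h3]
    have hL : (14 / 9 : ℝ) * Real.log 2 ≤ Real.log 3 := by
      have h2pow : ((2 : ℝ) ^ ((14 : ℝ) / 9)) ≤ 3 := by
        have hp9 : ((2 : ℝ) ^ ((14 : ℝ) / 9)) ^ (9 : ℕ) = 2 ^ (14 : ℕ) := by
          rw [← Real.rpow_natCast ((2 : ℝ) ^ ((14 : ℝ) / 9)) 9,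
            ← Real.rpow_mul (by norm_num)]
          norm_num
        have h914 : ((2 : ℝ) ^ (14 : ℕ)) ≤ 3 ^ (9 : ℕ) := by norm_num
        have := hp9 ▸ h914
        exact le_of_pow_le_pow_left₀ (by norm_num) (by norm_num) this
      calc (14 / 9 : ℝ) * Real.log 2 = Real.log ((2 : ℝ) ^ ((14 : ℝ) / 9)) := by
            rw [Real.log_rpow (by norm_num)]
        _ ≤ Real.log 3 := Real.log_le_log (by positivity) h2pow
    set L := Real.log 3 with hLdef
    have hLpos : 0 < L := Real.log_pos (by norm_num)
    have hexp : (3 : ℝ) ^ ((4 : ℝ) * L - 1) = Real.exp (((4 : ℝ) * L - 1) * L) := by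
      rw [Real.rpow_def_of_pos (by norm_num), ← hLdef]
      ring_nf
    have hgoal : (36 : ℝ) ≤ (3 : ℝ) ^ ((4 : ℝ) * L - 1) := by
      rw [hexp]
      have h36 : Real.log 36 = 2 * Real.log 2 + 2 * L := by
        have : (36 : ℝ) = 2 ^ (2 : ℕ) * 3 ^ (2 : ℕ) := by norm_num
        rw [this, Real.log_mul (by norm_num) (by norm_num), Real.log_pow, Real.log_pow]
        push_cast
        ring
      have hle : Real.log 36 ≤ ((4 : ℝ) * L - 1) * L := by
        rw [h36]
        nlinarith [hL, hlog2l, hlog2u, sq_nonneg (L - 1.078)]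
      calc (36 : ℝ) = Real.exp (Real.log 36) := (Real.exp_log (by norm_num)).symm
        _ ≤ Real.exp (((4 : ℝ) * L - 1) * L) := Real.exp_le_exp.mpr hle
    linarith
  · -- N ≥ 4
    have hN4' : (4 : ℝ) ≤ (N : ℝ) := by exact_mod_cast hN4
    have hlogN : (5 / 4 : ℝ) ≤ Real.log N := by
      have h1 : Real.log 4 ≤ Real.log N := Real.log_le_log (by norm_num) hN4'
      have h2 : Real.log 4 = 2 * Real.log 2 := by
        rw [show (4 : ℝ) = 2 ^ (2 : ℕ) by norm_num, Real.log_pow]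
        push_cast; ring
      nlinarith
    have hexp4 : (4 : ℝ) ≤ (4 : ℝ) * Real.log N - 1 := by nlinarith
    have h1 : (N : ℝ) ^ (4 : ℕ) ≤ (N : ℝ) ^ ((4 : ℝ) * Real.log N - 1) := by
      rw [← Real.rpow_natCast (N : ℝ) 4]
      exact Real.rpow_le_rpow_of_exponent_le (by linarith) (by push_cast; linarith)
    have h3 : (6 : ℝ) * ((N : ℝ) * N - N) ≤ (N : ℝ) ^ (4 : ℕ) := by
      nlinarith [sq_nonneg ((N:ℝ) - 4), sq_nonneg (N:ℝ)]
    linarith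

open PathAux in
theorem stmt0 {V : Type*} [Fintype V] (E : V → V → Prop)
    (hN : 2 < Fintype.card V)
    (hsc : ∀ u v : V, ∃ n : ℕ, 0 < n ∧ HasPath E n u v)
    (haper : ∀ d : ℕ, (∀ n : ℕ, 0 < n → (∃ u : V, HasPath E n u u) → d ∣ n) → d = 1) :
    ∀ n : ℕ,
      ⌊((Fintype.card V : ℝ) ^ ((4 : ℝ) * Real.log (Fintype.card V) - 1) / 6)⌋₊ ≤ n →
      ∀ u v : V, HasPath E n u v := by
  classical
  set N := Fintype.card V with hNdef
  have hN3 : 3 ≤ N := hN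
  -- a vertex exists
  have hVne : Nonempty V := Fintype.card_pos_iff.mp (by omega)
  obtain ⟨v0⟩ := hVne
  -- shortest closed walk
  have hex : ∃ n : ℕ, 0 < n ∧ ∃ w : V, HasPath E n w w := by
    obtain ⟨n, hn, hp⟩ := hsc v0 v0
    exact ⟨n, hn, v0, hp⟩
  obtain ⟨s, hspec, hminP⟩ :
      ∃ s : ℕ, (0 < s ∧ ∃ w : V, HasPath E s w w) ∧
        ∀ m < s, ¬(0 < m ∧ ∃ w : V, HasPath E m w w) :=
    ⟨Nat.find hex, Nat.find_spec hex, fun m hm => Nat.find_min hex hm⟩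
  obtain ⟨hspos, w0, hw0⟩ := hspec
  obtain ⟨f, hf0, hfs, hfe⟩ := hw0
  -- minimality: no shorter positive closed walk
  have hmin : ∀ m, 0 < m → m < s → ¬ ∃ w : V, HasPath E m w w := by
    intro m hm hms hcon
    exact hminP m hms ⟨hm, hcon⟩
  -- vertices f 0 .. f (s-1) are distinct
  have hinj : ∀ a < s, ∀ b < s, f a = f b → a = b := by
    intro a ha b hb hab
    by_contra hne
    rcases lt_or_gt_of_ne hne with hlt | hlt
    · have := hp_excise hf0 hfs hfe hlt (by omega) hab
      exact hmin _ (by omega) (by omega) ⟨w0, this⟩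
    · have := hp_excise hf0 hfs hfe hlt (by omega) hab.symm
      exact hmin _ (by omega) (by omega) ⟨w0, this⟩
  -- s ≤ N
  have hsN : s ≤ N := by
    by_contra hcon
    push_neg at hcon
    have hcard : Fintype.card V < Fintype.card (Fin s) := by simpa using hcon
    obtain ⟨a, b, hab, hfab⟩ :=
      Fintype.exists_ne_map_eq_of_card_lt (fun i : Fin s => f i) hcard
    rcases lt_or_gt_of_ne (fun hh : (a : ℕ) = (b : ℕ) => hab (Fin.ext hh)) with hlt | hlt
    · exact absurd (Fin.ext (hinj a a.isLt b b.isLt hfab)) hab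
    · exact absurd (Fin.ext (hinj a a.isLt b b.isLt hfab)) hab
  -- the cycle vertex set
  set W : Finset V := (Finset.range s).image f with hWdef
  have hWcard : W.card = s := by
    rw [hWdef, Finset.card_image_of_injOn, Finset.card_range]
    intro a ha b hb hab
    simp only [Finset.mem_coe, Finset.mem_range] at ha hb
    exact hinj a ha b hb hab
  -- every W vertex has a closed s-walk
  have hloops : ∀ w ∈ W, HasPath E s w w := by
    intro w hw
    rw [hWdef] at hw
    simp only [Finset.mem_image, Finset.mem_range] at hw
    obtain ⟨i, his, rfl⟩ := hw
    have h1 : HasPath E (s - i) (f i) (f 0) := by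
      refine ⟨fun t => f (i + t), rfl, ?_, fun t ht => ?_⟩
      · show f (i + (s - i)) = f 0
        have heq : i + (s - i) = s := by omega
        rw [heq, hfs, hf0]
      · show E (f (i + t)) (f (i + (t + 1)))
        have heq : i + (t + 1) = (i + t) + 1 := by omega
        rw [heq]
        exact hfe (i + t) (by omega)
    have h2 : HasPath E i (f 0) (f i) := hf0 ▸ hp_prefix hf0 hfs hfe (le_of_lt his)
    have := hp_trans h1 h2
    rwa [show s - i + i = s by omega] at this
  -- E-walks of length ≡ 0 mod s between any two vertices
  have hscs : ∀ x y : V, ∃ k : ℕ, HasPath E (k * s) x y := by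
    intro x y
    obtain ⟨a, ha0, haP⟩ := hsc x y
    obtain ⟨ℓ, hℓP, hℓdvd⟩ := residue_lemma hsc haper hspos y a
    obtain ⟨k, hk⟩ := hℓdvd
    refine ⟨k, ?_⟩
    have hks : k * s = a + ℓ := by rw [mul_comm]; omega
    rw [hks]
    exact hp_trans haP hℓP
  -- the s-power relation
  set E' : V → V → Prop := fun a b => HasPath E s a b with hE'def
  have hscE' : ∀ x y : V, ∃ k : ℕ, HasPath E' k x y := by
    intro x y
    obtain ⟨k, hk⟩ := hscs x y
    exact ⟨k, hp_pow_to hk⟩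
  -- reach any vertex within N - 1 steps in E'
  have hreach : ∀ x y : V, ∃ k, HasPath E' k x y ∧ k + 1 ≤ N := by
    intro x y
    exact exists_min_path (hscE' x y)
  -- reach W within N - s steps in E'
  have hentry : ∀ x : V, ∃ k, (∃ w ∈ W, HasPath E' k x w) ∧ k ≤ N - s := by
    intro x
    have : ∃ n, ∃ w ∈ W, HasPath E' n x w := by
      obtain ⟨k, hk⟩ := hscE' x (f 0)
      refine ⟨k, f 0, ?_, hk⟩
      rw [hWdef]
      exact Finset.mem_image.mpr ⟨0, Finset.mem_range.mpr hspos, rfl⟩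
    obtain ⟨k, hk1, hk2⟩ := exists_min_path_to_set W this
    exact ⟨k, hk1, by rwa [hWcard] at hk2⟩
  -- base case: all pairs connected by walks of length s * (2N - 1 - s)
  have hbase : ∀ u v : V, HasPath E (s * (2 * N - 1 - s)) u v := by
    intro u v
    obtain ⟨k1, ⟨w, hwW, hw1⟩, hk1⟩ := hentry u
    obtain ⟨k2, hw2, hk2⟩ := hreach w v
    set t := 2 * N - 1 - s - k1 - k2 with htdef
    have hloop : HasPath E' t w w := hp_pow_to (hp_mul (hloops w hwW) t)
    have htot : HasPath E' (k1 + (t + k2)) u v :=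
      hp_trans hw1 (hp_trans hloop hw2)
    have := hp_pow_of htot
    have heq : (k1 + (t + k2)) * s = s * (2 * N - 1 - s) := by
      have : k1 + (t + k2) = 2 * N - 1 - s := by omega
      rw [this, mul_comm]
    rwa [heq] at this
  -- propagation by one step
  have hstep : ∀ m : ℕ, (∀ u v : V, HasPath E m u v) → ∀ u v : V, HasPath E (m + 1) u v := by
    intro m hm u v
    obtain ⟨nv, hnv0, g, hg0, hgn, hge⟩ := hsc v v
    have hedge : E (g (nv - 1)) v := by
      have := hge (nv - 1) (by omega)
      rwa [show nv - 1 + 1 = nv by omega, hgn] at this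
    exact hp_trans (hm u (g (nv - 1))) (hp_one hedge)
  -- all lengths ≥ s * (2N - 1 - s)
  have hmain : ∀ m : ℕ, s * (2 * N - 1 - s) ≤ m → ∀ u v : V, HasPath E m u v := by
    intro m hm
    obtain ⟨j, rfl⟩ := Nat.exists_eq_add_of_le hm
    induction j with
    | zero => exact hbase
    | succ j ih =>
        have := hstep _ (ih (by omega))
        intro u v
        have heq : s * (2 * N - 1 - s) + (j + 1) = (s * (2 * N - 1 - s) + j) + 1 := by omega
        rw [heq]
        exact this u v
  -- final arithmetic
  intro n hn u v
  have hfloor : N * N - N ≤ ⌊((N : ℝ) ^ ((4 : ℝ) * Real.log N - 1) / 6)⌋₊ :=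
    Nat.le_floor (card_bound_aux N hN3)
  have hquad : s * (2 * N - 1 - s) ≤ N * N - N := by
    have hNN : N ≤ N * N := Nat.le_mul_of_pos_left N (by omega)
    rcases Nat.eq_or_lt_of_le hsN with h | h
    · rw [h]
      zify [show 1 ≤ 2*N by omega, show N ≤ 2*N-1 by omega, hNN]
      nlinarith
    · zify [show s ≤ 2*N-1 by omega, show 1 ≤ 2*N by omega, hNN]
      have h1 : (0:ℤ) ≤ (N:ℤ) - s - 1 := by
        have : (s:ℤ) + 1 ≤ (N:ℤ) := by exact_mod_cast h
        linarith
      nlinarith [mul_nonneg (by linarith : (0:ℤ) ≤ (N:ℤ) - s) h1]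
  exact hmain n (by omega) u v
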